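/- Let A and B be real symmetric positive semidefinite n×n matrices with A − B positive semidefinite and A positive definite (hence invertible). Then for every w ∈ ℝⁿ, (Bw)ᵀ A⁻¹ (Bw) ≤ wᵀ B w. -/

import Mathlib

open Matrix

/-- **Key PSD inequality.**
If `A, B` are real symmetric PSD matrices with `A - B` PSD and `A` positive
definite, then for every vector `w`, `(B w)ᵀ A⁻¹ (B w) ≤ wᵀ B w`. -/
theorem stmt2 (n : ℕ) (A B : Matrix (Fin n) (Fin n) ℝ)
    (hA : A.PosSemidef) (hB : B.PosSemidef) (hAB : (A - B).PosSemidef)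
    (hApd : A.PosDef) :
    ∀ w : Fin n → ℝ, (B *ᵥ w) ⬝ᵥ (A⁻¹ *ᵥ (B *ᵥ w)) ≤ w ⬝ᵥ (B *ᵥ w) := by
  intro w
  set u : Fin n → ℝ := B *ᵥ w with hu
  set v : Fin n → ℝ := A⁻¹ *ᵥ u with hv
  have hAv : A *ᵥ v = u := by
    rw [hv, mulVec_mulVec, Matrix.mul_nonsing_inv A (isUnit_iff_ne_zero.mpr hApd.det_pos.ne'), one_mulVec]
  -- v ⬝ (A *ᵥ v) = v ⬝ u
  have h1 : (0:ℝ) ≤ v ⬝ᵥ ((A - B) *ᵥ v) := by simpa using hAB.dotProduct_mulVec_nonneg v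
  have h1' : v ⬝ᵥ (B *ᵥ v) ≤ v ⬝ᵥ u := by
    have := h1
    rw [sub_mulVec, dotProduct_sub, hAv] at this
    linarith
  have h2 : (0:ℝ) ≤ (w - v) ⬝ᵥ (B *ᵥ (w - v)) := by simpa using hB.dotProduct_mulVec_nonneg (w - v)
  -- symmetry: v ⬝ (B *ᵥ w) = w ⬝ (B *ᵥ v)
  have hsym : v ⬝ᵥ (B *ᵥ w) = w ⬝ᵥ (B *ᵥ v) := by
    have hBt : Bᵀ = B := hB.isHermitian
    rw [dotProduct_comm w, dotProduct_mulVec, ← hBt, vecMul_transpose, hBt]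
  have h2' : 2 * (v ⬝ᵥ u) ≤ v ⬝ᵥ (B *ᵥ v) + w ⬝ᵥ (B *ᵥ w) := by
    have := h2
    rw [Matrix.mulVec_sub, sub_dotProduct, dotProduct_sub, dotProduct_sub] at this
    have hvu : v ⬝ᵥ (B *ᵥ w) = v ⬝ᵥ u := by rw [hu]
    have hwv : w ⬝ᵥ (B *ᵥ v) = v ⬝ᵥ u := by rw [← hsym, hvu]
    linarith [this, hvu, hwv, hsym.symm]
  have hgoal : u ⬝ᵥ v = v ⬝ᵥ u := dotProduct_comm u v
  calc u ⬝ᵥ (A⁻¹ *ᵥ u) = v ⬝ᵥ u := by rw [← hv, hgoal]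
    _ ≤ w ⬝ᵥ (B *ᵥ w) := by linarith
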